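/- Let b, c, m : ℝ → ℝ be smooth and let Q : ℝ³ → ℝ be smooth, Q = Q(t,x,y), satisfying for all (t,x,y) ∈ ℝ³: (i) Q_yy = 0; (ii) Q_ty − b(y)·Q_y = 0; (iii) Q_xy + c(y)·Q_y = 0; (iv) Q_tt − Q_xx − b(y)·Q_t − c(y)·Q_x − m(y)·Q_y + m′(y)·Q = 0. Then for every smooth solution u of the wave equation F[u] = 0, the composed function v(t,x) := Q(t,x,u(t,x)) satisfies the adjoint equation L*[u]v = ∂ₜ²v − ∂ₓ²v − b(u)·∂ₜv − c(u)·∂ₓv + m′(u)·v = 0 on ℝ². (Thus the substitution v = Q(t,x,u) realizes 'nonlinear self-adjointness' of the wave equation: v solves the adjoint equation whenever u solves the equation.) -/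

import Mathlib

noncomputable section

open Real

/-- Partial derivative in the first (time) variable. -/
def Dt (u : ℝ → ℝ → ℝ) : ℝ → ℝ → ℝ := fun t x => deriv (fun s => u s x) t

/-- Partial derivative in the second (space) variable. -/
def Dx (u : ℝ → ℝ → ℝ) : ℝ → ℝ → ℝ := fun t x => deriv (fun s => u t s) x

/-- Smoothness (C^∞) of a function of two real variables. -/
def Smooth2 (u : ℝ → ℝ → ℝ) : Prop := ContDiff ℝ (⊤ : ℕ∞) (fun p : ℝ × ℝ => u p.1 p.2)
/-- Partial derivative of Q(t,x,y) in its first argument. -/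
def D1 (Q : ℝ → ℝ → ℝ → ℝ) : ℝ → ℝ → ℝ → ℝ := fun t x y => deriv (fun s => Q s x y) t

/-- Partial derivative of Q(t,x,y) in its second argument. -/
def D2 (Q : ℝ → ℝ → ℝ → ℝ) : ℝ → ℝ → ℝ → ℝ := fun t x y => deriv (fun s => Q t s y) x

/-- Partial derivative of Q(t,x,y) in its third argument. -/
def D3 (Q : ℝ → ℝ → ℝ → ℝ) : ℝ → ℝ → ℝ → ℝ := fun t x y => deriv (fun s => Q t x s) y

/-- Smoothness (C^∞) of a function of three real variables. -/
def Smooth3 (Q : ℝ → ℝ → ℝ → ℝ) : Prop :=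
  ContDiff ℝ (⊤ : ℕ∞) (fun p : ℝ × ℝ × ℝ => Q p.1 p.2.1 p.2.2)
/-- The semilinear wave operator F[u] = ∂ₜ²u − ∂ₓ²u + b(u)∂ₜu + c(u)∂ₓu + m(u). -/
def Fop (b c m : ℝ → ℝ) (u : ℝ → ℝ → ℝ) : ℝ → ℝ → ℝ := fun t x =>
  Dt (Dt u) t x - Dx (Dx u) t x + b (u t x) * Dt u t x + c (u t x) * Dx u t x + m (u t x)

/-- The adjoint linearized operator along u:
L*[u]q = ∂ₜ²q − ∂ₓ²q − b(u)∂ₜq − c(u)∂ₓq + m′(u)q. -/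
def Lstar (b c m : ℝ → ℝ) (u q : ℝ → ℝ → ℝ) : ℝ → ℝ → ℝ := fun t x =>
  Dt (Dt q) t x - Dx (Dx q) t x - b (u t x) * Dt q t x - c (u t x) * Dx q t x
    + deriv m (u t x) * q t x

lemma two_le_inf : (2 : WithTop ℕ∞) ≤ ((⊤:ℕ∞) : WithTop ℕ∞) := by
  exact_mod_cast ENat.natCast_le_of_coe_top_le_withTop le_rfl 2

lemma one_le_inf : (1 : WithTop ℕ∞) ≤ ((⊤:ℕ∞) : WithTop ℕ∞) := by
  exact_mod_cast ENat.natCast_le_of_coe_top_le_withTop le_rfl 1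

section helpers
variable {E : Type*} [NormedAddCommGroup E] [NormedSpace ℝ E]

lemma pd_smooth {G : E → ℝ} (hG : ContDiff ℝ (⊤ : ℕ∞) G) (w : E) :
    ContDiff ℝ (⊤ : ℕ∞) (fun p => fderiv ℝ G p w) :=
  (hG.fderiv_right (by simp)).clm_apply contDiff_const

lemma comp_hasDerivAt' {G : E → ℝ} (hG : ContDiff ℝ (⊤ : ℕ∞) G) {w : ℝ → E} {w' : E} {t : ℝ}
    (hw : HasDerivAt w w' t) : HasDerivAt (fun s => G (w s)) (fderiv ℝ G (w t) w') t :=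
  ((hG.differentiable (by simp) (w t)).hasFDerivAt).comp_hasDerivAt t hw

lemma pd_comm {G : E → ℝ} (hG : ContDiff ℝ (⊤ : ℕ∞) G) (p v w : E) :
    fderiv ℝ (fun q => fderiv ℝ G q v) p w = fderiv ℝ (fun q => fderiv ℝ G q w) p v := by
  have hsym : IsSymmSndFDerivAt ℝ G p := hG.contDiffAt.isSymmSndFDerivAt (by simpa using two_le_inf)
  have hd : DifferentiableAt ℝ (fderiv ℝ G) p :=
    ((hG.fderiv_right (m := ((⊤:ℕ∞) : WithTop ℕ∞)) (by simp)).differentiable (by simp)) p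
  have key : ∀ z : E, fderiv ℝ (fun q => fderiv ℝ G q z) p
      = (ContinuousLinearMap.apply ℝ ℝ z).comp (fderiv ℝ (fderiv ℝ G) p) := by
    intro z
    exact (((ContinuousLinearMap.apply ℝ ℝ z).hasFDerivAt).comp p hd.hasFDerivAt).fderiv
  rw [key v, key w]
  simpa using hsym w v
end helpers

namespace Scratch

abbrev G3 (Q : ℝ → ℝ → ℝ → ℝ) : ℝ × ℝ × ℝ → ℝ := fun p => Q p.1 p.2.1 p.2.2
abbrev G2 (u : ℝ → ℝ → ℝ) : ℝ × ℝ → ℝ := fun p => u p.1 p.2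

lemma D1_eq {Q} (hQ : Smooth3 Q) (t x y : ℝ) :
    D1 Q t x y = fderiv ℝ (G3 Q) (t, x, y) (1, 0, 0) := by
  have h := comp_hasDerivAt' hQ
    ((hasDerivAt_id t).prodMk ((hasDerivAt_const t x).prodMk (hasDerivAt_const t y)))
  exact h.deriv.symm ▸ rfl

lemma D2_eq {Q} (hQ : Smooth3 Q) (t x y : ℝ) :
    D2 Q t x y = fderiv ℝ (G3 Q) (t, x, y) (0, 1, 0) := by
  have h := comp_hasDerivAt' hQ
    ((hasDerivAt_const x t).prodMk ((hasDerivAt_id x).prodMk (hasDerivAt_const x y)))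
  exact h.deriv.symm ▸ rfl

lemma D3_eq {Q} (hQ : Smooth3 Q) (t x y : ℝ) :
    D3 Q t x y = fderiv ℝ (G3 Q) (t, x, y) (0, 0, 1) := by
  have h := comp_hasDerivAt' hQ
    ((hasDerivAt_const y t).prodMk ((hasDerivAt_const y x).prodMk (hasDerivAt_id y)))
  exact h.deriv.symm ▸ rfl

lemma Dt_eq {u} (hu : Smooth2 u) (t x : ℝ) :
    Dt u t x = fderiv ℝ (G2 u) (t, x) (1, 0) := by
  have h := comp_hasDerivAt' hu ((hasDerivAt_id t).prodMk (hasDerivAt_const t x))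
  exact h.deriv.symm ▸ rfl

lemma Dx_eq {u} (hu : Smooth2 u) (t x : ℝ) :
    Dx u t x = fderiv ℝ (G2 u) (t, x) (0, 1) := by
  have h := comp_hasDerivAt' hu ((hasDerivAt_const x t).prodMk (hasDerivAt_id x))
  exact h.deriv.symm ▸ rfl

lemma smooth_D1 {Q} (hQ : Smooth3 Q) : Smooth3 (D1 Q) := by
  have : (fun p : ℝ × ℝ × ℝ => D1 Q p.1 p.2.1 p.2.2)
      = fun p => fderiv ℝ (G3 Q) p (1, 0, 0) := funext fun p => D1_eq hQ p.1 p.2.1 p.2.2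
  unfold Smooth3; rw [this]; exact pd_smooth hQ _

lemma smooth_D2 {Q} (hQ : Smooth3 Q) : Smooth3 (D2 Q) := by
  have : (fun p : ℝ × ℝ × ℝ => D2 Q p.1 p.2.1 p.2.2)
      = fun p => fderiv ℝ (G3 Q) p (0, 1, 0) := funext fun p => D2_eq hQ p.1 p.2.1 p.2.2
  unfold Smooth3; rw [this]; exact pd_smooth hQ _

lemma smooth_D3 {Q} (hQ : Smooth3 Q) : Smooth3 (D3 Q) := by
  have : (fun p : ℝ × ℝ × ℝ => D3 Q p.1 p.2.1 p.2.2)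
      = fun p => fderiv ℝ (G3 Q) p (0, 0, 1) := funext fun p => D3_eq hQ p.1 p.2.1 p.2.2
  unfold Smooth3; rw [this]; exact pd_smooth hQ _

lemma smooth_Dt {u} (hu : Smooth2 u) : Smooth2 (Dt u) := by
  have : (fun p : ℝ × ℝ => Dt u p.1 p.2)
      = fun p => fderiv ℝ (G2 u) p (1, 0) := funext fun p => Dt_eq hu p.1 p.2
  unfold Smooth2; rw [this]; exact pd_smooth hu _

lemma smooth_Dx {u} (hu : Smooth2 u) : Smooth2 (Dx u) := by
  have : (fun p : ℝ × ℝ => Dx u p.1 p.2)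
      = fun p => fderiv ℝ (G2 u) p (0, 1) := funext fun p => Dx_eq hu p.1 p.2
  unfold Smooth2; rw [this]; exact pd_smooth hu _

lemma hasDerivAt_slice_t {u} (hu : Smooth2 u) (t x : ℝ) :
    HasDerivAt (fun s => u s x) (Dt u t x) t := by
  rw [Dt_eq hu t x]
  exact comp_hasDerivAt' hu ((hasDerivAt_id t).prodMk (hasDerivAt_const t x))

lemma hasDerivAt_slice_x {u} (hu : Smooth2 u) (t x : ℝ) :
    HasDerivAt (fun s => u t s) (Dx u t x) x := by
  rw [Dx_eq hu t x]
  exact comp_hasDerivAt' hu ((hasDerivAt_const x t).prodMk (hasDerivAt_id x))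

lemma chain_t {Q u} (hQ : Smooth3 Q) (hu : Smooth2 u) (t x : ℝ) :
    HasDerivAt (fun s => Q s x (u s x))
      (D1 Q t x (u t x) + Dt u t x * D3 Q t x (u t x)) t := by
  have hw : HasDerivAt (fun s => ((s, x, u s x) : ℝ × ℝ × ℝ)) (1, 0, Dt u t x) t :=
    (hasDerivAt_id t).prodMk ((hasDerivAt_const t x).prodMk (hasDerivAt_slice_t hu t x))
  have h := comp_hasDerivAt' hQ hw
  have hdec : ((1 : ℝ), (0 : ℝ), Dt u t x)
      = ((1:ℝ), (0:ℝ), (0:ℝ)) + Dt u t x • ((0:ℝ), (0:ℝ), (1:ℝ)) := by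
    simp [Prod.ext_iff]
  rw [hdec, map_add, map_smul, smul_eq_mul, ← D1_eq hQ, ← D3_eq hQ] at h
  exact h

lemma chain_x {Q u} (hQ : Smooth3 Q) (hu : Smooth2 u) (t x : ℝ) :
    HasDerivAt (fun s => Q t s (u t s))
      (D2 Q t x (u t x) + Dx u t x * D3 Q t x (u t x)) x := by
  have hw : HasDerivAt (fun s => ((t, s, u t s) : ℝ × ℝ × ℝ)) (0, 1, Dx u t x) x :=
    (hasDerivAt_const x t).prodMk ((hasDerivAt_id x).prodMk (hasDerivAt_slice_x hu t x))
  have h := comp_hasDerivAt' hQ hw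
  have hdec : ((0 : ℝ), (1 : ℝ), Dx u t x)
      = ((0:ℝ), (1:ℝ), (0:ℝ)) + Dx u t x • ((0:ℝ), (0:ℝ), (1:ℝ)) := by
    simp [Prod.ext_iff]
  rw [hdec, map_add, map_smul, smul_eq_mul, ← D2_eq hQ, ← D3_eq hQ] at h
  exact h

lemma D31_comm {Q} (hQ : Smooth3 Q) (t x y : ℝ) :
    D3 (D1 Q) t x y = D1 (D3 Q) t x y := by
  have e1 : (fun p : ℝ × ℝ × ℝ => D1 Q p.1 p.2.1 p.2.2)
      = fun p => fderiv ℝ (G3 Q) p (1, 0, 0) := funext fun p => D1_eq hQ p.1 p.2.1 p.2.2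
  have e3 : (fun p : ℝ × ℝ × ℝ => D3 Q p.1 p.2.1 p.2.2)
      = fun p => fderiv ℝ (G3 Q) p (0, 0, 1) := funext fun p => D3_eq hQ p.1 p.2.1 p.2.2
  rw [D3_eq (smooth_D1 hQ) t x y, D1_eq (smooth_D3 hQ) t x y]
  show fderiv ℝ (G3 (D1 Q)) (t,x,y) (0,0,1) = fderiv ℝ (G3 (D3 Q)) (t,x,y) (1,0,0)
  rw [show G3 (D1 Q) = fun p => fderiv ℝ (G3 Q) p (1,0,0) from e1,
      show G3 (D3 Q) = fun p => fderiv ℝ (G3 Q) p (0,0,1) from e3]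
  exact pd_comm hQ _ _ _

lemma D32_comm {Q} (hQ : Smooth3 Q) (t x y : ℝ) :
    D3 (D2 Q) t x y = D2 (D3 Q) t x y := by
  have e2 : (fun p : ℝ × ℝ × ℝ => D2 Q p.1 p.2.1 p.2.2)
      = fun p => fderiv ℝ (G3 Q) p (0, 1, 0) := funext fun p => D2_eq hQ p.1 p.2.1 p.2.2
  have e3 : (fun p : ℝ × ℝ × ℝ => D3 Q p.1 p.2.1 p.2.2)
      = fun p => fderiv ℝ (G3 Q) p (0, 0, 1) := funext fun p => D3_eq hQ p.1 p.2.1 p.2.2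
  rw [D3_eq (smooth_D2 hQ) t x y, D2_eq (smooth_D3 hQ) t x y]
  show fderiv ℝ (G3 (D2 Q)) (t,x,y) (0,0,1) = fderiv ℝ (G3 (D3 Q)) (t,x,y) (0,1,0)
  rw [show G3 (D2 Q) = fun p => fderiv ℝ (G3 Q) p (0,1,0) from e2,
      show G3 (D3 Q) = fun p => fderiv ℝ (G3 Q) p (0,0,1) from e3]
  exact pd_comm hQ _ _ _

end Scratch

open Scratch in
/-- Nonlinear self-adjointness via the substitution v = Q(t,x,u): if Q(t,x,y)
satisfies the split adjoint-symmetry determining system, then v = Q(t,x,u)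
solves the adjoint equation whenever u solves the wave equation. -/
theorem stmt_5
    (b c m : ℝ → ℝ)
    (hb : ContDiff ℝ (⊤ : ℕ∞) b) (hc : ContDiff ℝ (⊤ : ℕ∞) c) (hm : ContDiff ℝ (⊤ : ℕ∞) m)
    (Q : ℝ → ℝ → ℝ → ℝ) (hQ : Smooth3 Q)
    (h1 : ∀ t x y : ℝ, D3 (D3 Q) t x y = 0)
    (h2 : ∀ t x y : ℝ, D1 (D3 Q) t x y - b y * D3 Q t x y = 0)
    (h3 : ∀ t x y : ℝ, D2 (D3 Q) t x y + c y * D3 Q t x y = 0)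
    (h4 : ∀ t x y : ℝ,
      D1 (D1 Q) t x y - D2 (D2 Q) t x y - b y * D1 Q t x y - c y * D2 Q t x y
        - m y * D3 Q t x y + deriv m y * Q t x y = 0)
    (u : ℝ → ℝ → ℝ) (hu : Smooth2 u) (hsol : ∀ t x, Fop b c m u t x = 0)
    (v : ℝ → ℝ → ℝ) (hvdef : ∀ t x, v t x = Q t x (u t x)) :
    ∀ t x, Lstar b c m u v t x = 0 := by
  have hsol' : ∀ t x, Dt (Dt u) t x - Dx (Dx u) t x + b (u t x) * Dt u t x
      + c (u t x) * Dx u t x + m (u t x) = 0 := fun t x => hsol t x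
  intro t x
  show Dt (Dt v) t x - Dx (Dx v) t x - b (u t x) * Dt v t x - c (u t x) * Dx v t x
      + deriv m (u t x) * v t x = 0

  have hDtv : ∀ a e : ℝ, Dt v a e = D1 Q a e (u a e) + Dt u a e * D3 Q a e (u a e) := by
    intro a e
    show deriv (fun s => v s e) a = _
    have hfe : (fun s => v s e) = fun s => Q s e (u s e) := funext fun s => hvdef s e
    rw [hfe]
    exact (chain_t hQ hu a e).deriv
  have hDxv : ∀ a e : ℝ, Dx v a e = D2 Q a e (u a e) + Dx u a e * D3 Q a e (u a e) := by
    intro a e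
    show deriv (fun s => v a s) e = _
    have hfe : (fun s => v a s) = fun s => Q a s (u a s) := funext fun s => hvdef a s
    rw [hfe]
    exact (chain_x hQ hu a e).deriv
  have hDttv : Dt (Dt v) t x
      = (D1 (D1 Q) t x (u t x) + Dt u t x * D3 (D1 Q) t x (u t x))
        + (Dt (Dt u) t x * D3 Q t x (u t x)
          + Dt u t x * (D1 (D3 Q) t x (u t x) + Dt u t x * D3 (D3 Q) t x (u t x))) := by
    show deriv (fun s => Dt v s x) t = _
    have hfe : (fun s => Dt v s x)
        = fun s => D1 Q s x (u s x) + Dt u s x * D3 Q s x (u s x) :=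
      funext fun s => hDtv s x
    rw [hfe]
    exact ((chain_t (smooth_D1 hQ) hu t x).add
      ((hasDerivAt_slice_t (smooth_Dt hu) t x).mul (chain_t (smooth_D3 hQ) hu t x))).deriv
  have hDxxv : Dx (Dx v) t x
      = (D2 (D2 Q) t x (u t x) + Dx u t x * D3 (D2 Q) t x (u t x))
        + (Dx (Dx u) t x * D3 Q t x (u t x)
          + Dx u t x * (D2 (D3 Q) t x (u t x) + Dx u t x * D3 (D3 Q) t x (u t x))) := by
    show deriv (fun s => Dx v t s) x = _
    have hfe : (fun s => Dx v t s)
        = fun s => D2 Q t s (u t s) + Dx u t s * D3 Q t s (u t s) :=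
      funext fun s => hDxv t s
    rw [hfe]
    exact ((chain_x (smooth_D2 hQ) hu t x).add
      ((hasDerivAt_slice_x (smooth_Dx hu) t x).mul (chain_x (smooth_D3 hQ) hu t x))).deriv
  rw [hDttv, hDxxv, hDtv t x, hDxv t x, hvdef t x, D31_comm hQ, D32_comm hQ]
  linear_combination h4 t x (u t x) + D3 Q t x (u t x) * hsol' t x
    + 2 * Dt u t x * h2 t x (u t x) - 2 * Dx u t x * h3 t x (u t x)
    + (Dt u t x ^ 2 - Dx u t x ^ 2) * h1 t x (u t x)
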